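/- Suppose dom A is partitioned into lumps {V}_{V∈𝒱} such that for all U,V ∈ 𝒱 and all u,u' ∈ U, ∑_{v∈V} q_{u,v} = ∑_{v∈V} q_{u',v}, where Q = (q_{u,v}) is a generator matrix on dom A. Define the lumped matrix Q̃ on 𝒱 by q̃_{U,V} = ∑_{v∈V} q_{u,v} for any u ∈ U. Then Q̃ is a generator matrix, and for every t ≥ 0, U,V ∈ 𝒱, and u ∈ U: ∑_{v∈V} (exp(tQ))_{u,v} = (exp(tQ̃))_{U,V}. -/

import Mathlib

open Finset

open scoped Matrix in
attribute [local instance] Matrix.linftyOpNormedRing Matrix.linftyOpNormedAlgebra in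
private lemma exp_intertwine {α β : Type*} [Fintype α] [Fintype β] [DecidableEq α] [DecidableEq β]
    (A : Matrix α α ℝ) (B : Matrix β β ℝ) (P : Matrix α β ℝ) (h : A * P = P * B) :
    NormedSpace.exp A * P = P * NormedSpace.exp B := by
  have hpow : ∀ n : ℕ, A ^ n * P = P * B ^ n := by
    intro n
    induction n with
    | zero => simp
    | succ n ih =>
      rw [pow_succ, pow_succ, Matrix.mul_assoc, h, ← Matrix.mul_assoc, ih, Matrix.mul_assoc]
  -- continuous linear maps: multiplication by P on the right / left
  let L : Matrix α α ℝ →L[ℝ] Matrix α β ℝ :=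
    LinearMap.toContinuousLinearMap
      { toFun := fun X => X * P
        map_add' := fun X Y => Matrix.add_mul X Y P
        map_smul' := fun c X => Matrix.smul_mul c X P }
  let R : Matrix β β ℝ →L[ℝ] Matrix α β ℝ :=
    LinearMap.toContinuousLinearMap
      { toFun := fun Y => P * Y
        map_add' := fun X Y => Matrix.mul_add P X Y
        map_smul' := fun c X => Matrix.mul_smul P c X }
  have hA : Summable fun n : ℕ => (Nat.factorial n : ℝ)⁻¹ • A ^ n :=
    NormedSpace.expSeries_summable' (𝕂 := ℝ) A
  have hB : Summable fun n : ℕ => (Nat.factorial n : ℝ)⁻¹ • B ^ n :=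
    NormedSpace.expSeries_summable' (𝕂 := ℝ) B
  have : L (NormedSpace.exp A) = R (NormedSpace.exp B) := by
    rw [NormedSpace.exp_eq_tsum (𝕂 := ℝ), NormedSpace.exp_eq_tsum (𝕂 := ℝ), L.map_tsum hA, R.map_tsum hB]
    refine tsum_congr fun n => ?_
    show ((Nat.factorial n : ℝ)⁻¹ • A ^ n) * P = P * ((Nat.factorial n : ℝ)⁻¹ • B ^ n)
    rw [Matrix.smul_mul, Matrix.mul_smul, hpow]
  exact this

/-- Lumpability of Markov chains.  `dom A` is partitioned into lumps via the
surjective lump-assignment map `π : α → β` (so the lump `V : β` is `π⁻¹{V}`).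
`Q` is a generator matrix on `α` (nonnegative off-diagonal entries, zero row sums)
such that for all `u, u'` in the same lump and every lump `V`,
`∑_{v∈V} Q u v = ∑_{v∈V} Q u' v`.  Define the lumped matrix
`Q̃ U V = ∑_{v∈V} Q u v` for any `u ∈ U` (via a section `σ` of `π`).  Then `Q̃` is a
generator matrix, and for every `t ≥ 0`, every `u` and every lump `V`,
`∑_{v∈V} (exp(tQ))_{u,v} = (exp(tQ̃))_{π u, V}`. -/
theorem markov_chain_lumping
    {α β : Type*} [Fintype α] [Fintype β] [DecidableEq α] [DecidableEq β]
    (π : α → β) (hπ : Function.Surjective π)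
    (σ : β → α) (hσ : ∀ U : β, π (σ U) = U)
    (Q : Matrix α α ℝ)
    (hQ_off : ∀ u v : α, u ≠ v → 0 ≤ Q u v)
    (hQ_row : ∀ u : α, ∑ v : α, Q u v = 0)
    (hlump : ∀ u u' : α, π u = π u' → ∀ V : β,
      ∑ v ∈ univ.filter (fun v : α => π v = V), Q u v =
        ∑ v ∈ univ.filter (fun v : α => π v = V), Q u' v)
    (Qt : Matrix β β ℝ)
    (hQt : ∀ U V : β, Qt U V = ∑ v ∈ univ.filter (fun v : α => π v = V), Q (σ U) v) :
    (∀ U V : β, U ≠ V → 0 ≤ Qt U V) ∧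
    (∀ U : β, ∑ V : β, Qt U V = 0) ∧
    (∀ t : ℝ, 0 ≤ t → ∀ (u : α) (V : β),
      ∑ v ∈ univ.filter (fun v : α => π v = V), (NormedSpace.exp (t • Q)) u v =
        (NormedSpace.exp (t • Qt)) (π u) V) := by
  refine ⟨?_, ?_, ?_⟩
  · intro U V hUV
    rw [hQt]
    refine Finset.sum_nonneg fun v hv => ?_
    refine hQ_off _ _ fun hsv => ?_
    rw [Finset.mem_filter] at hv
    exact hUV ((hσ U).symm.trans (by rw [hsv, hv.2]))
  · intro U
    calc ∑ V : β, Qt U V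
        = ∑ V : β, ∑ v ∈ univ.filter (fun v : α => π v = V), Q (σ U) v := by
          simp_rw [hQt]
      _ = ∑ v : α, Q (σ U) v := Finset.sum_fiberwise univ π (Q (σ U))
      _ = 0 := hQ_row _
  · intro t _ u V
    -- the lumping matrix
    set P : Matrix α β ℝ := Matrix.of fun (a : α) (W : β) => if π a = W then (1 : ℝ) else 0
      with hP
    have hQP : Q * P = P * Qt := by
      ext a W
      have h1 : (Q * P) a W = ∑ v ∈ univ.filter (fun v : α => π v = W), Q a v := by
        rw [Matrix.mul_apply]
        rw [Finset.sum_filter]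
        refine Finset.sum_congr rfl fun v _ => ?_
        by_cases hvW : π v = W <;> simp [hP, hvW]
      have h2 : (P * Qt) a W = Qt (π a) W := by
        rw [Matrix.mul_apply]
        rw [Finset.sum_eq_single (π a)]
        · simp [hP]
        · intro b _ hb; simp [hP, hb.symm]
        · simp
      rw [h1, h2, hQt]
      exact hlump a (σ (π a)) (by rw [hσ]) W
    have hQP' : (t • Q) * P = P * (t • Qt) := by
      rw [Matrix.smul_mul, Matrix.mul_smul, hQP]
    have hexp := exp_intertwine (t • Q) (t • Qt) P hQP'
    have h1 : (NormedSpace.exp (t • Q) * P) u V =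
        ∑ v ∈ univ.filter (fun v : α => π v = V), (NormedSpace.exp (t • Q)) u v := by
      rw [Matrix.mul_apply, Finset.sum_filter]
      refine Finset.sum_congr rfl fun v _ => ?_
      by_cases hvV : π v = V <;> simp [hP, hvV]
    have h2 : (P * NormedSpace.exp (t • Qt)) u V =
        (NormedSpace.exp (t • Qt)) (π u) V := by
      rw [Matrix.mul_apply, Finset.sum_eq_single (π u)]
      · simp [hP]
      · intro b _ hb; simp [hP, hb.symm]
      · simp
    rw [← h1, ← h2, hexp]
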